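/- A quadratic zero is isolated: let Ω be an entanglement witness and let (φ₀,χ₀) be a zero of Ω with ‖φ₀‖ = ‖χ₀‖ = 1 which is quadratic (has no Hessian zero). Then there exists ε > 0 such that every zero (φ,χ) of Ω with ‖φ‖ = ‖χ‖ = 1, ‖φ − φ₀‖ < ε and ‖χ − χ₀‖ < ε satisfies φ = a·φ₀ and χ = b·χ₀ for some complex scalars a, b. -/

import Mathlib

open Matrix
open scoped ComplexOrder

noncomputable section

namespace EW

/-- Complex square matrices indexed by `Fin Na × Fin Nb`. -/
abbrev Mat (Na Nb : ℕ) := Matrix (Fin Na × Fin Nb) (Fin Na × Fin Nb) ℂ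

/-- Kronecker product of vectors: `(φ⊗χ)_(i,j) = φ_i · χ_j`. -/
def kron {Na Nb : ℕ} (φ : Fin Na → ℂ) (χ : Fin Nb → ℂ) : Fin Na × Fin Nb → ℂ :=
  fun p => φ p.1 * χ p.2

/-- Sesquilinear pairing `xᴴ A y`. -/
def pair {n : Type*} [Fintype n] (A : Matrix n n ℂ) (x y : n → ℂ) : ℂ :=
  star x ⬝ᵥ A.mulVec y

/-- The biquadratic form `f_A(φ,χ) = (φ⊗χ)ᴴ A (φ⊗χ)`. -/
def biquad {Na Nb : ℕ} (A : Mat Na Nb) (φ : Fin Na → ℂ) (χ : Fin Nb → ℂ) : ℂ :=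
  pair A (kron φ χ) (kron φ χ)

/-- An entanglement witness: a Hermitian matrix whose biquadratic form is nonnegative. -/
def IsWitness {Na Nb : ℕ} (A : Mat Na Nb) : Prop :=
  A.IsHermitian ∧ ∀ φ χ, 0 ≤ biquad A φ χ

/-- `S₁°`, the set of trace-one entanglement witnesses. -/
def witnessSet (Na Nb : ℕ) : Set (Mat Na Nb) :=
  { Ω | IsWitness Ω ∧ Ω.trace = 1 }

/-- A zero of a witness: a pair of nonzero vectors where the biquadratic form vanishes. -/
def IsZeroOf {Na Nb : ℕ} (Ω : Mat Na Nb) (φ₀ : Fin Na → ℂ) (χ₀ : Fin Nb → ℂ) : Prop :=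
  φ₀ ≠ 0 ∧ χ₀ ≠ 0 ∧ biquad Ω φ₀ χ₀ = 0

/-- The Hessian form
`H_A(φ₀,χ₀;ξ,ζ) = Re[(ξ⊗χ₀)ᴴA(ξ⊗χ₀) + (φ₀⊗ζ)ᴴA(φ₀⊗ζ) + 2(φ₀⊗ζ)ᴴA(ξ⊗χ₀) + 2(φ₀⊗χ₀)ᴴA(ξ⊗ζ)]`. -/
def hessForm {Na Nb : ℕ} (A : Mat Na Nb) (φ₀ : Fin Na → ℂ) (χ₀ : Fin Nb → ℂ)
    (ξ : Fin Na → ℂ) (ζ : Fin Nb → ℂ) : ℝ :=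
  (pair A (kron ξ χ₀) (kron ξ χ₀) + pair A (kron φ₀ ζ) (kron φ₀ ζ)
    + 2 * pair A (kron φ₀ ζ) (kron ξ χ₀) + 2 * pair A (kron φ₀ χ₀) (kron ξ ζ)).re

/-- A Hessian zero of `Ω` at the zero `(φ₀,χ₀)`. -/
def IsHessianZeroAt {Na Nb : ℕ} (Ω : Mat Na Nb) (φ₀ : Fin Na → ℂ) (χ₀ : Fin Nb → ℂ)
    (ξ : Fin Na → ℂ) (ζ : Fin Nb → ℂ) : Prop :=
  (ξ, ζ) ≠ (0, 0) ∧ star φ₀ ⬝ᵥ ξ = 0 ∧ star χ₀ ⬝ᵥ ζ = 0 ∧ hessForm Ω φ₀ χ₀ ξ ζ = 0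

/-- A quadratic witness: a witness all of whose zeros have no Hessian zeros. -/
def IsQuadraticWitness {Na Nb : ℕ} (Ω : Mat Na Nb) : Prop :=
  IsWitness Ω ∧ ∀ φ₀ χ₀, IsZeroOf Ω φ₀ χ₀ → ∀ ξ ζ, ¬ IsHessianZeroAt Ω φ₀ χ₀ ξ ζ

/-- Partial transpose with respect to the second factor. -/
def ptrans {Na Nb : ℕ} (A : Mat Na Nb) : Mat Na Nb :=
  fun p q => A (p.1, q.2) (q.1, p.2)

/-- Euclidean norm of a complex vector. -/
def enorm {n : Type*} [Fintype n] (x : n → ℂ) : ℝ :=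
  Real.sqrt (star x ⬝ᵥ x).re

/-- Frobenius norm of a matrix. -/
def frobNorm {Na Nb : ℕ} (A : Mat Na Nb) : ℝ :=
  Real.sqrt (∑ i, ∑ j, ‖A i j‖ ^ 2)

/-- `S₁`, the set of separable states: the convex hull of normalized pure product states. -/
def sepSet (Na Nb : ℕ) : Set (Mat Na Nb) :=
  convexHull ℝ { M | ∃ (φ : Fin Na → ℂ) (χ : Fin Nb → ℂ), enorm (kron φ χ) = 1 ∧
    M = Matrix.vecMulVec (kron φ χ) (star (kron φ χ)) }

/-- `Γ` satisfies the constraint system of the witness `Ω`. -/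
def SatisfiesConstraints {Na Nb : ℕ} (Ω Γ : Mat Na Nb) : Prop :=
  (∀ φ₀ χ₀, IsZeroOf Ω φ₀ χ₀ →
    (∀ φ, pair Γ (kron φ χ₀) (kron φ₀ χ₀) = 0) ∧
    (∀ χ, pair Γ (kron φ₀ χ) (kron φ₀ χ₀) = 0)) ∧
  (∀ φ₀ χ₀, IsZeroOf Ω φ₀ χ₀ → ∀ ξ ζ, IsHessianZeroAt Ω φ₀ χ₀ ξ ζ →
    ∀ ξ' ζ', star φ₀ ⬝ᵥ ξ' = 0 → star χ₀ ⬝ᵥ ζ' = 0 →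
      hessForm Γ φ₀ χ₀ (ξ + ξ') (ζ + ζ') =
        hessForm Γ φ₀ χ₀ ξ ζ + hessForm Γ φ₀ χ₀ ξ' ζ') ∧
  (∀ φ₀ χ₀, IsZeroOf Ω φ₀ χ₀ → ∀ ξ ζ, IsHessianZeroAt Ω φ₀ χ₀ ξ ζ →
    (pair Γ (kron φ₀ ζ) (kron ξ ζ) + pair Γ (kron ξ χ₀) (kron ξ ζ)).re = 0)

end EW

namespace EWAux
open EW

-- ===== basic norm lemmas =====
def en2 {n : Type*} [Fintype n] (x : n → ℂ) : ℝ := ∑ i, ‖x i‖^2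

lemma ipxx {n : Type*} [Fintype n] (x : n → ℂ) : star x ⬝ᵥ x = (en2 x : ℂ) := by
  simp only [dotProduct, en2, Pi.star_apply, Complex.ofReal_sum]
  refine Finset.sum_congr rfl fun i _ => ?_
  rw [Complex.star_def, ← Complex.normSq_eq_conj_mul_self, Complex.normSq_eq_norm_sq]

lemma en2_nonneg {n : Type*} [Fintype n] (x : n → ℂ) : 0 ≤ en2 x :=
  Finset.sum_nonneg fun _ _ => sq_nonneg _

lemma enorm_eq {n : Type*} [Fintype n] (x : n → ℂ) : EW.enorm x = Real.sqrt (en2 x) := by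
  rw [EW.enorm, ipxx]; norm_num

lemma enorm_sq {n : Type*} [Fintype n] (x : n → ℂ) : EW.enorm x ^ 2 = en2 x := by
  rw [enorm_eq, Real.sq_sqrt (en2_nonneg x)]

lemma enorm_nonneg {n : Type*} [Fintype n] (x : n → ℂ) : 0 ≤ EW.enorm x := Real.sqrt_nonneg _

lemma en2_eq_zero {n : Type*} [Fintype n] {x : n → ℂ} (h : en2 x = 0) : x = 0 := by
  funext i
  have := (Finset.sum_eq_zero_iff_of_nonneg (fun i _ => sq_nonneg ‖x i‖)).mp h i (Finset.mem_univ i)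
  simpa using pow_eq_zero_iff (n := 2) (by norm_num) |>.mp this

lemma apply_le_enorm {n : Type*} [Fintype n] (x : n → ℂ) (i : n) : ‖x i‖ ≤ EW.enorm x := by
  rw [enorm_eq]
  have : ‖x i‖^2 ≤ en2 x := Finset.single_le_sum (f := fun j => ‖x j‖^2) (fun j _ => sq_nonneg _) (Finset.mem_univ i)
  calc ‖x i‖ = Real.sqrt (‖x i‖^2) := by rw [Real.sqrt_sq (norm_nonneg _)]
  _ ≤ _ := Real.sqrt_le_sqrt this

lemma en2_kron {Na Nb : ℕ} (φ : Fin Na → ℂ) (χ : Fin Nb → ℂ) :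
    en2 (kron φ χ) = en2 φ * en2 χ := by
  simp only [en2, kron, Fintype.sum_prod_type, Finset.mul_sum, Finset.sum_mul, mul_pow, norm_mul]
  rw [Finset.sum_comm]

lemma en2_smul {n : Type*} [Fintype n] (c : ℂ) (x : n → ℂ) :
    en2 (c • x) = ‖c‖^2 * en2 x := by
  simp [en2, Finset.mul_sum, mul_pow]

-- ===== pair/kron algebra =====
lemma pair_add_left {n : Type*} [Fintype n] (A : Matrix n n ℂ) (x y z : n → ℂ) :
    pair A (x + y) z = pair A x z + pair A y z := by
  simp [pair, add_dotProduct]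

lemma pair_add_right {n : Type*} [Fintype n] (A : Matrix n n ℂ) (x y z : n → ℂ) :
    pair A x (y + z) = pair A x y + pair A x z := by
  simp [pair, mulVec_add, dotProduct_add]

lemma pair_smul_left {n : Type*} [Fintype n] (A : Matrix n n ℂ) (c : ℂ) (x y : n → ℂ) :
    pair A (c • x) y = (starRingEnd ℂ) c * pair A x y := by
  simp [pair, star_smul, smul_dotProduct]

lemma pair_smul_right {n : Type*} [Fintype n] (A : Matrix n n ℂ) (c : ℂ) (x y : n → ℂ) :
    pair A x (c • y) = c * pair A x y := by
  simp [pair, mulVec_smul, dotProduct_smul]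

lemma pair_conj {n : Type*} [Fintype n] {A : Matrix n n ℂ} (hA : A.IsHermitian)
    (x y : n → ℂ) : pair A y x = (starRingEnd ℂ) (pair A x y) := by
  simp only [pair, dotProduct, mulVec, dotProduct, Pi.star_apply, Finset.mul_sum, map_sum]
  rw [Finset.sum_comm]
  refine Finset.sum_congr rfl fun j _ => Finset.sum_congr rfl fun i _ => ?_
  have hAji : (starRingEnd ℂ) (A j i) = A i j := by
    have := congrFun (congrFun hA i) j
    simpa [conjTranspose_apply] using this
  simp only [map_mul (starRingEnd ℂ), Complex.star_def, Complex.conj_conj, hAji]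
  ring

lemma kron_add_left {Na Nb : ℕ} (φ ψ : Fin Na → ℂ) (χ : Fin Nb → ℂ) :
    kron (φ + ψ) χ = kron φ χ + kron ψ χ := by funext p; simp [kron]; ring

lemma kron_add_right {Na Nb : ℕ} (φ : Fin Na → ℂ) (χ ψ : Fin Nb → ℂ) :
    kron φ (χ + ψ) = kron φ χ + kron φ ψ := by funext p; simp [kron]; ring

lemma kron_smul_left {Na Nb : ℕ} (c : ℂ) (φ : Fin Na → ℂ) (χ : Fin Nb → ℂ) :
    kron (c • φ) χ = c • kron φ χ := by funext p; simp [kron]; ring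

lemma kron_smul_right {Na Nb : ℕ} (c : ℂ) (φ : Fin Na → ℂ) (χ : Fin Nb → ℂ) :
    kron φ (c • χ) = c • kron φ χ := by funext p; simp [kron]; ring

lemma kron_expand {Na Nb : ℕ} (a b : ℂ) (φ₀ ξ : Fin Na → ℂ) (χ₀ ζ : Fin Nb → ℂ) :
    kron (a • φ₀ + ξ) (b • χ₀ + ζ) =
      (a*b) • kron φ₀ χ₀ + a • kron φ₀ ζ + b • kron ξ χ₀ + kron ξ ζ := by
  funext p; simp [kron]; ring

lemma dot_conj {n : Type*} [Fintype n] (x y : n → ℂ) :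
    star x ⬝ᵥ y = (starRingEnd ℂ) (star y ⬝ᵥ x) := by
  simp only [dotProduct, Pi.star_apply, map_sum]
  exact Finset.sum_congr rfl fun i _ => by
    simp only [map_mul (starRingEnd ℂ), Complex.star_def, Complex.conj_conj]; ring

lemma pythagoras {n : Type*} [Fintype n] (x y : n → ℂ) (c : ℂ) (h : star y ⬝ᵥ x = 0) :
    en2 (x + c • y) = en2 x + ‖c‖^2 * en2 y := by
  have hx' : star x ⬝ᵥ y = 0 := by rw [dot_conj, h, map_zero]
  have key : ((en2 (x + c • y) : ℝ) : ℂ) = ((en2 x + ‖c‖^2 * en2 y : ℝ) : ℂ) := by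
    rw [← ipxx]
    simp only [star_add, star_smul, add_dotProduct, dotProduct_add, smul_dotProduct,
      dotProduct_smul, h, hx', smul_eq_mul, mul_zero, zero_add, add_zero]
    rw [ipxx, ipxx]
    simp only [Complex.star_def, Complex.ofReal_add, Complex.ofReal_mul]
    rw [show ((‖c‖^2 : ℝ) : ℂ) = (starRingEnd ℂ) c * c by
      rw [← Complex.normSq_eq_conj_mul_self, Complex.normSq_eq_norm_sq]]
    ring
  exact_mod_cast key

lemma pair_abs_le {n : Type*} [Fintype n] (A : Matrix n n ℂ) (x y : n → ℂ) :
    ‖pair A x y‖ ≤ (∑ i, ∑ j, ‖A i j‖) * EW.enorm x * EW.enorm y := by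
  calc ‖pair A x y‖ = ‖∑ i, ∑ j, star (x i) * (A i j * y j)‖ := by
        simp [pair, dotProduct, mulVec, Finset.mul_sum]
  _ ≤ ∑ i, ∑ j, ‖star (x i) * (A i j * y j)‖ :=
      (norm_sum_le _ _).trans (Finset.sum_le_sum fun i _ => norm_sum_le _ _)
  _ ≤ ∑ i, ∑ j, ‖A i j‖ * (EW.enorm x * EW.enorm y) := by
      refine Finset.sum_le_sum fun i _ => Finset.sum_le_sum fun j _ => ?_
      rw [norm_mul, norm_mul, norm_star]
      calc ‖x i‖ * (‖A i j‖ * ‖y j‖) ≤ EW.enorm x * (‖A i j‖ * EW.enorm y) :=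
            mul_le_mul (apply_le_enorm x i)
              (mul_le_mul_of_nonneg_left (apply_le_enorm y j) (norm_nonneg _))
              (by positivity) (enorm_nonneg x)
      _ = ‖A i j‖ * (EW.enorm x * EW.enorm y) := by ring
  _ = (∑ i, ∑ j, ‖A i j‖) * EW.enorm x * EW.enorm y := by
      rw [Finset.sum_mul, Finset.sum_mul]
      exact Finset.sum_congr rfl fun i _ => by rw [Finset.sum_mul, Finset.sum_mul]; exact Finset.sum_congr rfl fun j _ => by ring


lemma re_two_mul (z : ℂ) : ((2:ℂ) * z).re = 2 * z.re := by
  rw [two_mul, Complex.add_re]; ring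

-- ===== nonnegativity in ComplexOrder =====
lemma nonneg_re_im {z : ℂ} (h : 0 ≤ z) : 0 ≤ z.re ∧ z.im = 0 := by
  rw [Complex.le_def] at h
  exact ⟨h.1, h.2.symm⟩

-- ===== kernel lemmas =====
section Kernel
variable {Na Nb : ℕ} {Ω : Mat Na Nb} (hΩ : IsWitness Ω)
  {φ₀ : Fin Na → ℂ} {χ₀ : Fin Nb → ℂ} (hz0 : biquad Ω φ₀ χ₀ = 0)

lemma kernel_core {n : Type*} [Fintype n] {A : Matrix n n ℂ} (hA : A.IsHermitian)
    {e u : n → ℂ} (hee : pair A e e = 0)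
    (hq : ∀ c : ℂ, 0 ≤ pair A (e + c • u) (e + c • u))
    (hqu : 0 ≤ pair A u u) : pair A u e = 0 := by
  set z := pair A u e with hz
  set Q := (pair A u u).re with hQdef
  have hQ0 : 0 ≤ Q := (nonneg_re_im hqu).1
  have hQim : (pair A u u).im = 0 := (nonneg_re_im hqu).2
  set t : ℝ := 1/(Q+1) with ht
  have hQ1 : (0:ℝ) < Q + 1 := by linarith
  have htpos : 0 < t := by positivity
  have htq : t * (Q + 1) = 1 := by rw [ht, one_div, inv_mul_cancel₀ hQ1.ne']
  set c : ℂ := -(t:ℂ) * z with hc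
  have h0 : 0 ≤ (pair A (e + c • u) (e + c • u)).re := (nonneg_re_im (hq c)).1
  have hexp : pair A (e + c • u) (e + c • u)
      = c * (starRingEnd ℂ) z + (starRingEnd ℂ) c * z + ((starRingEnd ℂ) c * c) * pair A u u := by
    rw [pair_add_left, pair_add_right, pair_add_right, pair_smul_left, pair_smul_right,
      pair_smul_right, pair_smul_left, hee, pair_conj hA u e, ← hz]
    ring
  rw [hexp] at h0
  set n' := z.re^2 + z.im^2 with hn'
  have hre : (c * (starRingEnd ℂ) z + (starRingEnd ℂ) c * z + ((starRingEnd ℂ) c * c) * pair A u u).re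
      = -2*t*n' + t^2*n'*Q := by
    simp only [hc, Complex.mul_re, Complex.mul_im, Complex.conj_re, Complex.conj_im,
      Complex.neg_re, Complex.neg_im, Complex.ofReal_re, Complex.ofReal_im, Complex.add_re,
      hQim, ← hQdef, hn']
    ring
  rw [hre] at h0
  have hnn : 0 ≤ n' := by positivity
  have heq : -2*t*n' + t^2*n'*Q = -(t*n'*(1+t)) := by linear_combination t*n'*htq
  have hn0 : n' = 0 := by nlinarith [mul_nonneg (mul_nonneg htpos.le hnn) (by linarith : (0:ℝ) ≤ 1+t)]
  have : Complex.normSq z = 0 := by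
    rw [Complex.normSq_apply]; nlinarith [hn0]
  exact Complex.normSq_eq_zero.mp this

include hΩ hz0 in
lemma kernelA (x : Fin Na → ℂ) : pair Ω (kron x χ₀) (kron φ₀ χ₀) = 0 := by
  refine kernel_core hΩ.1 (by simpa [biquad] using hz0) (fun c => ?_) (by simpa [biquad] using hΩ.2 x χ₀)
  have := hΩ.2 (φ₀ + c • x) χ₀
  simpa [biquad, kron_add_left, kron_smul_left] using this

include hΩ hz0 in
lemma kernelB (y : Fin Nb → ℂ) : pair Ω (kron φ₀ y) (kron φ₀ χ₀) = 0 := by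
  refine kernel_core hΩ.1 (by simpa [biquad] using hz0) (fun c => ?_) (by simpa [biquad] using hΩ.2 φ₀ y)
  have := hΩ.2 φ₀ (χ₀ + c • y)
  simpa [biquad, kron_add_right, kron_smul_right] using this

end Kernel


-- ===== master expansion =====
section Expand
variable {Na Nb : ℕ} {Ω : Mat Na Nb}
  {φ₀ : Fin Na → ℂ} {χ₀ : Fin Nb → ℂ}

lemma expansion (hA : Ω.IsHermitian) (hee : pair Ω (kron φ₀ χ₀) (kron φ₀ χ₀) = 0)
    (hK1 : ∀ x, pair Ω (kron x χ₀) (kron φ₀ χ₀) = 0)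
    (hK2 : ∀ y, pair Ω (kron φ₀ y) (kron φ₀ χ₀) = 0)
    (a b : ℂ) (ξ : Fin Na → ℂ) (ζ : Fin Nb → ℂ) :
    biquad Ω (a • φ₀ + ξ) (b • χ₀ + ζ) =
      ((starRingEnd ℂ) a * a) * pair Ω (kron φ₀ ζ) (kron φ₀ ζ)
      + ((starRingEnd ℂ) b * b) * pair Ω (kron ξ χ₀) (kron ξ χ₀)
      + (((starRingEnd ℂ) a * b) * pair Ω (kron φ₀ ζ) (kron ξ χ₀)
          + (starRingEnd ℂ) (((starRingEnd ℂ) a * b) * pair Ω (kron φ₀ ζ) (kron ξ χ₀)))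
      + (((starRingEnd ℂ) a * (starRingEnd ℂ) b) * pair Ω (kron φ₀ χ₀) (kron ξ ζ)
          + (starRingEnd ℂ) (((starRingEnd ℂ) a * (starRingEnd ℂ) b) * pair Ω (kron φ₀ χ₀) (kron ξ ζ)))
      + ((starRingEnd ℂ) a * pair Ω (kron φ₀ ζ) (kron ξ ζ)
          + (starRingEnd ℂ) ((starRingEnd ℂ) a * pair Ω (kron φ₀ ζ) (kron ξ ζ)))
      + ((starRingEnd ℂ) b * pair Ω (kron ξ χ₀) (kron ξ ζ)
          + (starRingEnd ℂ) ((starRingEnd ℂ) b * pair Ω (kron ξ χ₀) (kron ξ ζ)))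
      + pair Ω (kron ξ ζ) (kron ξ ζ) := by
  have heu : pair Ω (kron φ₀ χ₀) (kron ξ χ₀) = 0 := by
    rw [pair_conj hA, hK1 ξ, map_zero]
  have hew : pair Ω (kron φ₀ χ₀) (kron φ₀ ζ) = 0 := by
    rw [pair_conj hA, hK2 ζ, map_zero]
  have huw : pair Ω (kron ξ χ₀) (kron φ₀ ζ) = (starRingEnd ℂ) (pair Ω (kron φ₀ ζ) (kron ξ χ₀)) :=
    pair_conj hA _ _
  have hse : pair Ω (kron ξ ζ) (kron φ₀ χ₀) = (starRingEnd ℂ) (pair Ω (kron φ₀ χ₀) (kron ξ ζ)) :=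
    pair_conj hA _ _
  have hsw : pair Ω (kron ξ ζ) (kron φ₀ ζ) = (starRingEnd ℂ) (pair Ω (kron φ₀ ζ) (kron ξ ζ)) :=
    pair_conj hA _ _
  have hsu : pair Ω (kron ξ ζ) (kron ξ χ₀) = (starRingEnd ℂ) (pair Ω (kron ξ χ₀) (kron ξ ζ)) :=
    pair_conj hA _ _
  simp only [biquad, kron_expand, pair_add_left, pair_add_right, pair_smul_left,
    pair_smul_right, _root_.map_mul, Complex.conj_conj, hee, hK1 ξ, hK2 ζ, heu, hew, huw, hse, hsw, hsu]
  ring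

lemma expansion_re (hA : Ω.IsHermitian) (hee : pair Ω (kron φ₀ χ₀) (kron φ₀ χ₀) = 0)
    (hK1 : ∀ x, pair Ω (kron x χ₀) (kron φ₀ χ₀) = 0)
    (hK2 : ∀ y, pair Ω (kron φ₀ y) (kron φ₀ χ₀) = 0)
    (a b : ℂ) (ξ : Fin Na → ℂ) (ζ : Fin Nb → ℂ) :
    (biquad Ω (a • φ₀ + ξ) (b • χ₀ + ζ)).re =
      ‖a‖^2 * (pair Ω (kron φ₀ ζ) (kron φ₀ ζ)).re
      + ‖b‖^2 * (pair Ω (kron ξ χ₀) (kron ξ χ₀)).re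
      + 2 * (((starRingEnd ℂ) a * b) * pair Ω (kron φ₀ ζ) (kron ξ χ₀)).re
      + 2 * (((starRingEnd ℂ) a * (starRingEnd ℂ) b) * pair Ω (kron φ₀ χ₀) (kron ξ ζ)).re
      + 2 * ((starRingEnd ℂ) a * pair Ω (kron φ₀ ζ) (kron ξ ζ)).re
      + 2 * ((starRingEnd ℂ) b * pair Ω (kron ξ χ₀) (kron ξ ζ)).re
      + (pair Ω (kron ξ ζ) (kron ξ ζ)).re := by
  rw [expansion hA hee hK1 hK2 a b ξ ζ]
  rw [show ((starRingEnd ℂ) a * a) = ((‖a‖^2 : ℝ) : ℂ) by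
    rw [← Complex.normSq_eq_conj_mul_self, Complex.normSq_eq_norm_sq]]
  rw [show ((starRingEnd ℂ) b * b) = ((‖b‖^2 : ℝ) : ℂ) by
    rw [← Complex.normSq_eq_conj_mul_self, Complex.normSq_eq_norm_sq]]
  simp only [Complex.add_re, Complex.conj_re, Complex.re_ofReal_mul]
  ring

-- scaled Hessian identity
lemma hess_scaled (a b : ℂ) (ξ : Fin Na → ℂ) (ζ : Fin Nb → ℂ) :
    hessForm Ω φ₀ χ₀ ((starRingEnd ℂ) a • ξ) ((starRingEnd ℂ) b • ζ) =
      ‖a‖^2 * (pair Ω (kron ξ χ₀) (kron ξ χ₀)).re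
      + ‖b‖^2 * (pair Ω (kron φ₀ ζ) (kron φ₀ ζ)).re
      + 2 * (((starRingEnd ℂ) a * b) * pair Ω (kron φ₀ ζ) (kron ξ χ₀)).re
      + 2 * (((starRingEnd ℂ) a * (starRingEnd ℂ) b) * pair Ω (kron φ₀ χ₀) (kron ξ ζ)).re := by
  have key : pair Ω (kron ((starRingEnd ℂ) a • ξ) χ₀) (kron ((starRingEnd ℂ) a • ξ) χ₀)
      + pair Ω (kron φ₀ ((starRingEnd ℂ) b • ζ)) (kron φ₀ ((starRingEnd ℂ) b • ζ))
      + 2 * pair Ω (kron φ₀ ((starRingEnd ℂ) b • ζ)) (kron ((starRingEnd ℂ) a • ξ) χ₀)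
      + 2 * pair Ω (kron φ₀ χ₀) (kron ((starRingEnd ℂ) a • ξ) ((starRingEnd ℂ) b • ζ)) =
      ((‖a‖^2 : ℝ) : ℂ) * pair Ω (kron ξ χ₀) (kron ξ χ₀)
      + ((‖b‖^2 : ℝ) : ℂ) * pair Ω (kron φ₀ ζ) (kron φ₀ ζ)
      + 2 * (((starRingEnd ℂ) a * b) * pair Ω (kron φ₀ ζ) (kron ξ χ₀))
      + 2 * (((starRingEnd ℂ) a * (starRingEnd ℂ) b) * pair Ω (kron φ₀ χ₀) (kron ξ ζ)) := by
    rw [show ((‖a‖^2 : ℝ) : ℂ) = ((starRingEnd ℂ) a * a) by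
      rw [← Complex.normSq_eq_conj_mul_self, Complex.normSq_eq_norm_sq]]
    rw [show ((‖b‖^2 : ℝ) : ℂ) = ((starRingEnd ℂ) b * b) by
      rw [← Complex.normSq_eq_conj_mul_self, Complex.normSq_eq_norm_sq]]
    simp only [kron_smul_left, kron_smul_right, smul_smul, pair_smul_left, pair_smul_right,
      _root_.map_mul, Complex.conj_conj]
    ring
  rw [hessForm, key]
  simp only [Complex.add_re, Complex.re_ofReal_mul, re_two_mul]

lemma hess_homog (r : ℝ) (ξ : Fin Na → ℂ) (ζ : Fin Nb → ℂ) :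
    hessForm Ω φ₀ χ₀ ((r:ℂ) • ξ) ((r:ℂ) • ζ) = r^2 * hessForm Ω φ₀ χ₀ ξ ζ := by
  have key : pair Ω (kron ((r:ℂ) • ξ) χ₀) (kron ((r:ℂ) • ξ) χ₀)
      + pair Ω (kron φ₀ ((r:ℂ) • ζ)) (kron φ₀ ((r:ℂ) • ζ))
      + 2 * pair Ω (kron φ₀ ((r:ℂ) • ζ)) (kron ((r:ℂ) • ξ) χ₀)
      + 2 * pair Ω (kron φ₀ χ₀) (kron ((r:ℂ) • ξ) ((r:ℂ) • ζ)) =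
      ((r^2 : ℝ) : ℂ) * (pair Ω (kron ξ χ₀) (kron ξ χ₀) + pair Ω (kron φ₀ ζ) (kron φ₀ ζ)
        + 2 * pair Ω (kron φ₀ ζ) (kron ξ χ₀) + 2 * pair Ω (kron φ₀ χ₀) (kron ξ ζ)) := by
    simp only [kron_smul_left, kron_smul_right, smul_smul, pair_smul_left, pair_smul_right,
      _root_.map_mul, Complex.conj_ofReal]
    push_cast
    ring
  rw [hessForm, hessForm, key, Complex.re_ofReal_mul]

end Expand


-- ===== Hessian nonnegativity =====
section HessNonneg
variable {Na Nb : ℕ} {Ω : Mat Na Nb} {φ₀ : Fin Na → ℂ} {χ₀ : Fin Nb → ℂ}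

lemma hess_re_eq (ξ : Fin Na → ℂ) (ζ : Fin Nb → ℂ) :
    hessForm Ω φ₀ χ₀ ξ ζ = (pair Ω (kron ξ χ₀) (kron ξ χ₀)).re
      + (pair Ω (kron φ₀ ζ) (kron φ₀ ζ)).re
      + 2 * (pair Ω (kron φ₀ ζ) (kron ξ χ₀)).re
      + 2 * (pair Ω (kron φ₀ χ₀) (kron ξ ζ)).re := by
  rw [hessForm]
  simp only [Complex.add_re, re_two_mul]

lemma hess_nonneg (hΩ : IsWitness Ω) (hz0 : biquad Ω φ₀ χ₀ = 0)
    (ξ : Fin Na → ℂ) (ζ : Fin Nb → ℂ) : 0 ≤ hessForm Ω φ₀ χ₀ ξ ζ := by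
  have hA := hΩ.1
  have hee : pair Ω (kron φ₀ χ₀) (kron φ₀ χ₀) = 0 := by simpa [biquad] using hz0
  have hK1 := kernelA hΩ hz0
  have hK2 := kernelB hΩ hz0
  set H := hessForm Ω φ₀ χ₀ ξ ζ with hHdef
  set c3 : ℝ := 2 * (pair Ω (kron φ₀ ζ) (kron ξ ζ)).re
    + 2 * (pair Ω (kron ξ χ₀) (kron ξ ζ)).re with hc3
  set c4 : ℝ := (pair Ω (kron ξ ζ) (kron ξ ζ)).re with hc4
  have hgt : ∀ t : ℝ, (biquad Ω ((1:ℂ) • φ₀ + (t:ℂ) • ξ) ((1:ℂ) • χ₀ + (t:ℂ) • ζ)).re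
      = t^2 * H + t^3 * c3 + t^4 * c4 := by
    intro t
    rw [expansion_re hA hee hK1 hK2 1 1 ((t:ℂ) • ξ) ((t:ℂ) • ζ), hHdef, hess_re_eq, hc3, hc4]
    simp only [kron_smul_left, kron_smul_right, smul_smul, pair_smul_left, pair_smul_right,
      _root_.map_mul, Complex.conj_ofReal, _root_.map_one, one_mul, mul_one, norm_one, one_pow,
      ← Complex.ofReal_pow, ← Complex.ofReal_mul, Complex.re_ofReal_mul]
    ring
  have key : ∀ t : ℝ, 0 < t → 0 ≤ H + c3 * t + c4 * t^2 := by
    intro t ht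
    have h0 : 0 ≤ (biquad Ω ((1:ℂ) • φ₀ + (t:ℂ) • ξ) ((1:ℂ) • χ₀ + (t:ℂ) • ζ)).re :=
      (nonneg_re_im (hΩ.2 _ _)).1
    rw [hgt t] at h0
    have h1 : 0 ≤ t^2 * (H + c3 * t + c4 * t^2) := by nlinarith [h0]
    exact nonneg_of_mul_nonneg_right (by linarith [h1]) (by positivity : (0:ℝ) < t^2)
  have hlim : Filter.Tendsto (fun t : ℝ => H + c3 * t + c4 * t^2)
      (nhdsWithin 0 (Set.Ioi 0)) (nhds H) := by
    have hcont : Continuous fun t : ℝ => H + c3 * t + c4 * t^2 := by continuity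
    have h0 := hcont.tendsto 0
    simp only [mul_zero, add_zero, zero_pow, ne_eq, OfNat.ofNat_ne_zero,
      not_false_eq_true] at h0
    norm_num at h0
    exact h0.mono_left nhdsWithin_le_nhds
  exact ge_of_tendsto hlim (Filter.eventually_of_mem self_mem_nhdsWithin fun t ht => key t ht)

end HessNonneg


-- ===== coercivity =====
section Coercive
variable {Na Nb : ℕ} {Ω : Mat Na Nb} {φ₀ : Fin Na → ℂ} {χ₀ : Fin Nb → ℂ}

lemma hess_continuous :
    Continuous (fun p : (Fin Na → ℂ) × (Fin Nb → ℂ) => hessForm Ω φ₀ χ₀ p.1 p.2) := by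
  unfold hessForm pair kron mulVec dotProduct
  fun_prop

lemma en2_continuous {n : Type*} [Fintype n] : Continuous (fun x : n → ℂ => en2 x) := by
  unfold en2; fun_prop

lemma dot_continuous {n : Type*} [Fintype n] (v : n → ℂ) :
    Continuous (fun x : n → ℂ => star v ⬝ᵥ x) := by
  unfold dotProduct; fun_prop

lemma hess_zero : hessForm Ω φ₀ χ₀ 0 0 = 0 := by
  have h1 : kron (0 : Fin Na → ℂ) χ₀ = 0 := by funext p; simp [kron]
  have h2 : kron φ₀ (0 : Fin Nb → ℂ) = 0 := by funext p; simp [kron]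
  have h3 : kron (0 : Fin Na → ℂ) (0 : Fin Nb → ℂ) = 0 := by funext p; simp [kron]
  simp [hessForm, h1, h2, h3, pair, mulVec_zero, dotProduct_zero]

lemma coercive (hΩ : IsWitness Ω) (hz0 : biquad Ω φ₀ χ₀ = 0)
    (hquad : ∀ ξ ζ, ¬ IsHessianZeroAt Ω φ₀ χ₀ ξ ζ) :
    ∃ c > 0, ∀ ξ ζ, star φ₀ ⬝ᵥ ξ = 0 → star χ₀ ⬝ᵥ ζ = 0 →
      c * (en2 ξ + en2 ζ) ≤ hessForm Ω φ₀ χ₀ ξ ζ := by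
  classical
  set P := (Fin Na → ℂ) × (Fin Nb → ℂ)
  set K : Set P := {p | star φ₀ ⬝ᵥ p.1 = 0 ∧ star χ₀ ⬝ᵥ p.2 = 0 ∧ en2 p.1 + en2 p.2 = 1}
    with hKdef
  -- normalization: any orthogonal pair with positive norm yields an element of K
  have hnormalize : ∀ ξ ζ, star φ₀ ⬝ᵥ ξ = 0 → star χ₀ ⬝ᵥ ζ = 0 →
      0 < en2 ξ + en2 ζ →
      ∀ r : ℝ, r = Real.sqrt (en2 ξ + en2 ζ) →
      (((r⁻¹ : ℝ) : ℂ) • ξ, ((r⁻¹ : ℝ) : ℂ) • ζ) ∈ K := by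
    intro ξ ζ hoξ hoζ hpos r hr
    have hrpos : 0 < r := by rw [hr]; positivity
    refine ⟨?_, ?_, ?_⟩
    · show star φ₀ ⬝ᵥ (((r⁻¹ : ℝ) : ℂ) • ξ) = 0
      rw [dotProduct_smul, hoξ, smul_zero]
    · show star χ₀ ⬝ᵥ (((r⁻¹ : ℝ) : ℂ) • ζ) = 0
      rw [dotProduct_smul, hoζ, smul_zero]
    · show en2 (((r⁻¹ : ℝ) : ℂ) • ξ) + en2 (((r⁻¹ : ℝ) : ℂ) • ζ) = 1
      rw [en2_smul, en2_smul]
      have hnc : ‖((r⁻¹ : ℝ) : ℂ)‖ = r⁻¹ := by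
        rw [Complex.norm_real, Real.norm_eq_abs, abs_of_nonneg (by positivity)]
      rw [hnc]
      have hr2 : r^2 = en2 ξ + en2 ζ := by rw [hr, Real.sq_sqrt hpos.le]
      field_simp
      linarith [hr2]
  have hmain : ∀ m : ℝ, 0 < m → (∀ p ∈ K, m ≤ hessForm Ω φ₀ χ₀ p.1 p.2) →
      ∀ ξ ζ, star φ₀ ⬝ᵥ ξ = 0 → star χ₀ ⬝ᵥ ζ = 0 →
        m * (en2 ξ + en2 ζ) ≤ hessForm Ω φ₀ χ₀ ξ ζ := by
    intro m hm hle ξ ζ hoξ hoζ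
    rcases eq_or_lt_of_le (by have := en2_nonneg ξ; have := en2_nonneg ζ; linarith :
        (0:ℝ) ≤ en2 ξ + en2 ζ) with h0 | hpos
    · have hξ : ξ = 0 := en2_eq_zero (by nlinarith [en2_nonneg ξ, en2_nonneg ζ])
      have hζ : ζ = 0 := en2_eq_zero (by nlinarith [en2_nonneg ξ, en2_nonneg ζ])
      rw [hξ, hζ, hess_zero]
      simp [en2]
    · set r := Real.sqrt (en2 ξ + en2 ζ) with hr
      have hrpos : 0 < r := by rw [hr]; positivity
      have hr2 : r^2 = en2 ξ + en2 ζ := by rw [hr, Real.sq_sqrt hpos.le]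
      have hmem := hnormalize ξ ζ hoξ hoζ hpos r hr
      have h1 := hle _ hmem
      have h2 : hessForm Ω φ₀ χ₀ (((r⁻¹ : ℝ) : ℂ) • ξ) (((r⁻¹ : ℝ) : ℂ) • ζ)
          = (r⁻¹)^2 * hessForm Ω φ₀ χ₀ ξ ζ := hess_homog r⁻¹ ξ ζ
      rw [h2] at h1
      have h3 : m * r^2 ≤ hessForm Ω φ₀ χ₀ ξ ζ := by
        rw [inv_pow] at h1
        calc m * r^2 ≤ ((r^2)⁻¹ * hessForm Ω φ₀ χ₀ ξ ζ) * r^2 := by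
              apply mul_le_mul_of_nonneg_right h1 (by positivity)
        _ = hessForm Ω φ₀ χ₀ ξ ζ := by field_simp
      rw [hr2] at h3; exact h3
  by_cases hK : K.Nonempty
  · -- compactness
    have hclosed : IsClosed K := by
      have h1 : IsClosed {p : P | star φ₀ ⬝ᵥ p.1 = 0} :=
        isClosed_eq ((dot_continuous φ₀).comp continuous_fst) continuous_const
      have h2 : IsClosed {p : P | star χ₀ ⬝ᵥ p.2 = 0} :=
        isClosed_eq ((dot_continuous χ₀).comp continuous_snd) continuous_const
      have h3 : IsClosed {p : P | en2 p.1 + en2 p.2 = 1} :=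
        isClosed_eq (((en2_continuous).comp continuous_fst).add
          ((en2_continuous).comp continuous_snd)) continuous_const
      exact (h1.inter (h2.inter h3))
    have hsub : K ⊆ Metric.closedBall 0 1 := by
      intro p hp
      rw [Metric.mem_closedBall, dist_zero_right, Prod.norm_def]
      have hb : ∀ (n : Type) [Fintype n] (x : n → ℂ), en2 x ≤ 1 → ‖x‖ ≤ 1 := by
        intro n _ x hx
        rw [pi_norm_le_iff_of_nonneg zero_le_one]
        intro i
        calc ‖x i‖ = Real.sqrt (‖x i‖^2) := (Real.sqrt_sq (norm_nonneg _)).symm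
        _ ≤ Real.sqrt (en2 x) := Real.sqrt_le_sqrt
            (Finset.single_le_sum (f := fun j => ‖x j‖^2) (fun j _ => sq_nonneg _)
              (Finset.mem_univ i))
        _ ≤ 1 := by
            rw [show (1:ℝ) = Real.sqrt 1 by simp]
            exact Real.sqrt_le_sqrt hx
      have e1 : en2 p.1 ≤ 1 := by have := en2_nonneg p.2; linarith [hp.2.2]
      have e2 : en2 p.2 ≤ 1 := by have := en2_nonneg p.1; linarith [hp.2.2]
      exact max_le (hb _ p.1 e1) (hb _ p.2 e2)
    have hcomp : IsCompact K :=
      (isCompact_closedBall (0 : P) 1).of_isClosed_subset hclosed hsub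
    obtain ⟨p, hpK, hpmin⟩ := hcomp.exists_isMinOn hK hess_continuous.continuousOn
    set m := hessForm Ω φ₀ χ₀ p.1 p.2 with hm
    have hm0 : 0 ≤ m := hess_nonneg hΩ hz0 _ _
    have hmne : m ≠ 0 := by
      intro hmz
      have hpne : (p.1, p.2) ≠ (0, 0) := by
        intro hcontra
        have h1 : p.1 = 0 := congrArg Prod.fst hcontra
        have h2 : p.2 = 0 := congrArg Prod.snd hcontra
        have := hpK.2.2
        rw [h1, h2] at this
        simp [en2] at this
      exact hquad p.1 p.2 ⟨hpne, hpK.1, hpK.2.1, hmz⟩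
    have hmpos : 0 < m := lt_of_le_of_ne hm0 (Ne.symm hmne)
    exact ⟨m, hmpos, hmain m hmpos (fun q hq => isMinOn_iff.mp hpmin q hq)⟩
  · -- K empty: only the zero pair is orthogonal-normalized
    refine ⟨1, one_pos, ?_⟩
    apply hmain 1 one_pos
    intro q hq
    exact absurd ⟨q, hq⟩ hK

end Coercive


-- ===== EW.enorm of kron =====
lemma enorm_kron {Na Nb : ℕ} (φ : Fin Na → ℂ) (χ : Fin Nb → ℂ) :
    EW.enorm (kron φ χ) = EW.enorm φ * EW.enorm χ := by
  rw [enorm_eq, enorm_eq, enorm_eq, en2_kron,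
    Real.sqrt_mul (en2_nonneg φ)]

end EWAux

set_option maxHeartbeats 2000000 in
open EW EWAux in
theorem quadratic_zero_isolated' (Na Nb : ℕ) (Ω : Mat Na Nb) (hΩ : IsWitness Ω)
    (φ₀ : Fin Na → ℂ) (χ₀ : Fin Nb → ℂ) (hz0 : biquad Ω φ₀ χ₀ = 0)
    (hnφ : EW.enorm φ₀ = 1) (hnχ : EW.enorm χ₀ = 1)
    (hquad : ∀ ξ ζ, ¬ IsHessianZeroAt Ω φ₀ χ₀ ξ ζ) :
    ∃ ε > 0, ∀ (φ : Fin Na → ℂ) (χ : Fin Nb → ℂ), biquad Ω φ χ = 0 →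
      EW.enorm φ = 1 → EW.enorm χ = 1 →
      EW.enorm (φ - φ₀) < ε → EW.enorm (χ - χ₀) < ε →
      ∃ a b : ℂ, φ = a • φ₀ ∧ χ = b • χ₀ := by
  obtain ⟨c, hc, hcoer⟩ := coercive hΩ hz0 hquad
  set C : ℝ := ∑ i, ∑ j, ‖Ω i j‖ with hCdef
  have hC : 0 ≤ C := Finset.sum_nonneg fun i _ => Finset.sum_nonneg fun j _ => norm_nonneg _
  set ε : ℝ := min 1 (c / (2 * (c + 4*C + 1))) with hεdef
  have hεpos : 0 < ε := by
    apply lt_min one_pos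
    positivity
  have hε1 : ε ≤ 1 := min_le_left _ _
  have hεc : ε * (2 * (c + 4*C + 1)) ≤ c := by
    have h2 : ε ≤ c / (2 * (c + 4*C + 1)) := min_le_right _ _
    have hd : 0 < 2 * (c + 4*C + 1) := by positivity
    calc ε * (2 * (c + 4*C + 1)) ≤ (c / (2 * (c + 4*C + 1))) * (2 * (c + 4*C + 1)) :=
          mul_le_mul_of_nonneg_right h2 hd.le
    _ = c := by field_simp
  refine ⟨ε, hεpos, ?_⟩
  intro φ χ hzφχ hnφ1 hnχ1 hdφ hdχ
  -- basic facts
  have hA := hΩ.1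
  have hee : pair Ω (kron φ₀ χ₀) (kron φ₀ χ₀) = 0 := by simpa [biquad] using hz0
  have hK1 := kernelA hΩ hz0
  have hK2 := kernelB hΩ hz0
  have hen2φ₀ : en2 φ₀ = 1 := by rw [← enorm_sq, hnφ]; norm_num
  have hen2χ₀ : en2 χ₀ = 1 := by rw [← enorm_sq, hnχ]; norm_num
  have hipφ₀ : star φ₀ ⬝ᵥ φ₀ = 1 := by rw [ipxx, hen2φ₀]; norm_num
  have hipχ₀ : star χ₀ ⬝ᵥ χ₀ = 1 := by rw [ipxx, hen2χ₀]; norm_num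
  set a : ℂ := star φ₀ ⬝ᵥ φ with hadef
  set b : ℂ := star χ₀ ⬝ᵥ χ with hbdef
  set ξ : Fin Na → ℂ := φ - a • φ₀ with hξdef
  set ζ : Fin Nb → ℂ := χ - b • χ₀ with hζdef
  have horthξ : star φ₀ ⬝ᵥ ξ = 0 := by
    rw [hξdef, dotProduct_sub, dotProduct_smul, hipφ₀, ← hadef]
    simp
  have horthζ : star χ₀ ⬝ᵥ ζ = 0 := by
    rw [hζdef, dotProduct_sub, dotProduct_smul, hipχ₀, ← hbdef]
    simp
  have hφdec : φ = a • φ₀ + ξ := by rw [hξdef]; abel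
  have hχdec : χ = b • χ₀ + ζ := by rw [hζdef]; abel
  -- Pythagoras facts
  set sξ : ℝ := en2 ξ with hsξ
  set sζ : ℝ := en2 ζ with hsζ
  have hsξ0 : 0 ≤ sξ := en2_nonneg ξ
  have hsζ0 : 0 ≤ sζ := en2_nonneg ζ
  have hna : ‖a‖^2 = 1 - sξ := by
    have h1 : en2 (ξ + a • φ₀) = sξ + ‖a‖^2 * en2 φ₀ := pythagoras ξ φ₀ a horthξ
    have h2 : ξ + a • φ₀ = φ := by rw [hξdef]; abel
    rw [h2, hen2φ₀] at h1
    have h3 : en2 φ = 1 := by rw [← enorm_sq, hnφ1]; norm_num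
    rw [h3] at h1; linarith
  have hnb : ‖b‖^2 = 1 - sζ := by
    have h1 : en2 (ζ + b • χ₀) = sζ + ‖b‖^2 * en2 χ₀ := pythagoras ζ χ₀ b horthζ
    have h2 : ζ + b • χ₀ = χ := by rw [hζdef]; abel
    rw [h2, hen2χ₀] at h1
    have h3 : en2 χ = 1 := by rw [← enorm_sq, hnχ1]; norm_num
    rw [h3] at h1; linarith
  have hsξε : sξ < ε^2 := by
    have h1 : en2 (ξ + (a - 1) • φ₀) = sξ + ‖a - 1‖^2 * en2 φ₀ := pythagoras ξ φ₀ (a-1) horthξ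
    have h2 : ξ + (a - 1) • φ₀ = φ - φ₀ := by
      rw [hξdef]; funext i
      simp only [Pi.add_apply, Pi.sub_apply, Pi.smul_apply, smul_eq_mul]
      ring
    rw [h2, hen2φ₀] at h1
    have h3 : en2 (φ - φ₀) < ε^2 := by
      rw [← enorm_sq]
      exact pow_lt_pow_left₀ hdφ (enorm_nonneg _) two_ne_zero
    linarith only [h1, h3, sq_nonneg ‖a - 1‖]
  have hsζε : sζ < ε^2 := by
    have h1 : en2 (ζ + (b - 1) • χ₀) = sζ + ‖b - 1‖^2 * en2 χ₀ := pythagoras ζ χ₀ (b-1) horthζ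
    have h2 : ζ + (b - 1) • χ₀ = χ - χ₀ := by
      rw [hζdef]; funext i
      simp only [Pi.add_apply, Pi.sub_apply, Pi.smul_apply, smul_eq_mul]
      ring
    rw [h2, hen2χ₀] at h1
    have h3 : en2 (χ - χ₀) < ε^2 := by
      rw [← enorm_sq]
      exact pow_lt_pow_left₀ hdχ (enorm_nonneg _) two_ne_zero
    linarith only [h1, h3, sq_nonneg ‖b - 1‖]
  -- EW.enorm variables
  set nξ : ℝ := EW.enorm ξ with hnξ
  set nζ : ℝ := EW.enorm ζ with hnζ
  have hnξ0 : 0 ≤ nξ := enorm_nonneg ξ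
  have hnζ0 : 0 ≤ nζ := enorm_nonneg ζ
  have hnξ2 : nξ^2 = sξ := enorm_sq ξ
  have hnζ2 : nζ^2 = sζ := enorm_sq ζ
  have hnξε : nξ ≤ ε := by
    rw [hnξ, enorm_eq, ← hsξ]
    calc Real.sqrt sξ ≤ Real.sqrt (ε^2) := Real.sqrt_le_sqrt hsξε.le
    _ = ε := Real.sqrt_sq hεpos.le
  have hnζε : nζ ≤ ε := by
    rw [hnζ, enorm_eq, ← hsζ]
    calc Real.sqrt sζ ≤ Real.sqrt (ε^2) := Real.sqrt_le_sqrt hsζε.le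
    _ = ε := Real.sqrt_sq hεpos.le
  have ha1 : ‖a‖ ≤ 1 := by nlinarith only [hna, hsξ0, norm_nonneg a]
  have hb1 : ‖b‖ ≤ 1 := by nlinarith only [hnb, hsζ0, norm_nonneg b]
  -- pair quantities
  set W : ℝ := (pair Ω (kron φ₀ ζ) (kron φ₀ ζ)).re with hW
  set U : ℝ := (pair Ω (kron ξ χ₀) (kron ξ χ₀)).re with hU
  set Ra : ℝ := ((starRingEnd ℂ) a * pair Ω (kron φ₀ ζ) (kron ξ ζ)).re with hRa
  set Rb : ℝ := ((starRingEnd ℂ) b * pair Ω (kron ξ χ₀) (kron ξ ζ)).re with hRb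
  set S : ℝ := (pair Ω (kron ξ ζ) (kron ξ ζ)).re with hS
  set X : ℝ := (((starRingEnd ℂ) a * b) * pair Ω (kron φ₀ ζ) (kron ξ χ₀)).re with hX
  set Y : ℝ := (((starRingEnd ℂ) a * (starRingEnd ℂ) b) * pair Ω (kron φ₀ χ₀) (kron ξ ζ)).re
    with hY
  -- the expansion of the zero
  have hexp : 0 = ‖a‖^2 * W + ‖b‖^2 * U + 2*X + 2*Y + 2*Ra + 2*Rb + S := by
    have h0 : (biquad Ω φ χ).re = 0 := by rw [hzφχ]; simp
    rw [hφdec, hχdec] at h0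
    rw [expansion_re hA hee hK1 hK2 a b ξ ζ] at h0
    linarith only [h0]
  -- the scaled Hessian
  set H' : ℝ := hessForm Ω φ₀ χ₀ ((starRingEnd ℂ) a • ξ) ((starRingEnd ℂ) b • ζ) with hH'
  have hHeq : H' = ‖a‖^2 * U + ‖b‖^2 * W + 2*X + 2*Y := hess_scaled a b ξ ζ
  -- coercivity applied to the scaled pair
  have hcoer' : c * ((1 - sξ) * sξ + (1 - sζ) * sζ) ≤ H' := by
    have ho1 : star φ₀ ⬝ᵥ ((starRingEnd ℂ) a • ξ) = 0 := by
      rw [dotProduct_smul, horthξ, smul_zero]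
    have ho2 : star χ₀ ⬝ᵥ ((starRingEnd ℂ) b • ζ) = 0 := by
      rw [dotProduct_smul, horthζ, smul_zero]
    have h1 := hcoer _ _ ho1 ho2
    have h2 : en2 ((starRingEnd ℂ) a • ξ) = (1 - sξ) * sξ := by
      rw [en2_smul, RCLike.norm_conj, hna]
    have h3 : en2 ((starRingEnd ℂ) b • ζ) = (1 - sζ) * sζ := by
      rw [en2_smul, RCLike.norm_conj, hnb]
    rw [h2, h3] at h1
    exact h1
  -- bounds
  have habs_re : ∀ z : ℂ, |z.re| ≤ ‖z‖ := fun z => Complex.abs_re_le_norm z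
  have hWb : |W| ≤ C * (nζ * nζ) := by
    calc |W| ≤ ‖pair Ω (kron φ₀ ζ) (kron φ₀ ζ)‖ := habs_re _
    _ ≤ C * EW.enorm (kron φ₀ ζ) * EW.enorm (kron φ₀ ζ) := pair_abs_le Ω _ _
    _ = C * (nζ * nζ) := by rw [enorm_kron, hnφ]; ring
  have hUb : |U| ≤ C * (nξ * nξ) := by
    calc |U| ≤ ‖pair Ω (kron ξ χ₀) (kron ξ χ₀)‖ := habs_re _
    _ ≤ C * EW.enorm (kron ξ χ₀) * EW.enorm (kron ξ χ₀) := pair_abs_le Ω _ _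
    _ = C * (nξ * nξ) := by rw [enorm_kron, hnχ]; ring
  have hRab : |Ra| ≤ C * (nζ * (nξ * nζ)) := by
    calc |Ra| ≤ ‖(starRingEnd ℂ) a * pair Ω (kron φ₀ ζ) (kron ξ ζ)‖ := habs_re _
    _ = ‖a‖ * ‖pair Ω (kron φ₀ ζ) (kron ξ ζ)‖ := by rw [norm_mul, RCLike.norm_conj]
    _ ≤ 1 * (C * EW.enorm (kron φ₀ ζ) * EW.enorm (kron ξ ζ)) := by
        apply mul_le_mul ha1 (pair_abs_le Ω _ _) (norm_nonneg _) zero_le_one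
    _ = C * (EW.enorm (kron φ₀ ζ) * EW.enorm (kron ξ ζ)) := by ring
    _ = C * (nζ * (nξ * nζ)) := by rw [enorm_kron, enorm_kron, hnφ]; ring
  have hRbb : |Rb| ≤ C * (nξ * (nξ * nζ)) := by
    calc |Rb| ≤ ‖(starRingEnd ℂ) b * pair Ω (kron ξ χ₀) (kron ξ ζ)‖ := habs_re _
    _ = ‖b‖ * ‖pair Ω (kron ξ χ₀) (kron ξ ζ)‖ := by rw [norm_mul, RCLike.norm_conj]
    _ ≤ 1 * (C * EW.enorm (kron ξ χ₀) * EW.enorm (kron ξ ζ)) := by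
        apply mul_le_mul hb1 (pair_abs_le Ω _ _) (norm_nonneg _) zero_le_one
    _ = C * (EW.enorm (kron ξ χ₀) * EW.enorm (kron ξ ζ)) := by ring
    _ = C * (nξ * (nξ * nζ)) := by rw [enorm_kron, enorm_kron, hnχ]; ring
  have hSb : |S| ≤ C * ((nξ * nζ) * (nξ * nζ)) := by
    calc |S| ≤ ‖pair Ω (kron ξ ζ) (kron ξ ζ)‖ := habs_re _
    _ ≤ C * EW.enorm (kron ξ ζ) * EW.enorm (kron ξ ζ) := pair_abs_le Ω _ _
    _ = C * ((nξ * nζ) * (nξ * nζ)) := by rw [enorm_kron]; ring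
  -- combine
  have hkey : H' = -((sζ - sξ) * (W - U) + 2*Ra + 2*Rb + S) := by
    have e1 := hexp
    rw [hna, hnb] at hHeq e1
    linear_combination hHeq - e1
  have hWa := abs_le.mp hWb
  have hUa := abs_le.mp hUb
  have hRaa := abs_le.mp hRab
  have hRba := abs_le.mp hRbb
  have hSa := abs_le.mp hSb
  clear_value H' X Y W U Ra Rb S nξ nζ sξ sζ
  have hs20 : 0 ≤ sξ + sζ := by linarith only [hsξ0, hsζ0]
  -- upper bound for H'
  have hterm1 : -((sζ - sξ) * (W - U)) ≤ ε^2 * (C * (nζ*nζ) + C * (nξ*nξ)) := by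
    have h1 : |sζ - sξ| ≤ ε^2 := by
      rw [abs_le]
      constructor <;> [linarith only [hsξε, hsζ0]; linarith only [hsζε, hsξ0]]
    have h2 : |W - U| ≤ C * (nζ*nζ) + C * (nξ*nξ) := by
      calc |W - U| ≤ |W| + |U| := abs_sub _ _
      _ ≤ _ := add_le_add hWb hUb
    calc -((sζ - sξ) * (W - U)) ≤ |(sζ - sξ) * (W - U)| := neg_le_abs _
    _ = |sζ - sξ| * |W - U| := abs_mul _ _
    _ ≤ ε^2 * (C * (nζ*nζ) + C * (nξ*nξ)) :=
        mul_le_mul h1 h2 (abs_nonneg _) (sq_nonneg ε)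
  have hup : H' ≤ ε^2 * (C * (nζ*nζ) + C * (nξ*nξ)) + 2*(C * (nζ * (nξ * nζ)))
      + 2*(C * (nξ * (nξ * nζ))) + C * ((nξ * nζ) * (nξ * nζ)) := by
    rw [hkey]
    linarith only [hterm1, hRaa.1, hRba.1, hSa.1]
  -- bound each term by multiples of ε * (sξ + sζ)
  have t1 : ε^2 * (C * (nζ*nζ) + C * (nξ*nξ)) ≤ C * ε * (sξ + sζ) := by
    have hnn : nζ * nζ = sζ := by rw [← hnζ2]; ring
    have hnn' : nξ * nξ = sξ := by rw [← hnξ2]; ring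
    rw [hnn, hnn']
    have he2 : 0 ≤ ε - ε^2 := by nlinarith only [hεpos, hε1]
    have hh : 0 ≤ C * (ε - ε^2) * (sξ + sζ) :=
      mul_nonneg (mul_nonneg hC he2) hs20
    nlinarith only [hh]
  have t2 : 2*(C * (nζ * (nξ * nζ))) ≤ 2 * (C * ε * sζ) := by
    have e : nζ * (nξ * nζ) = nξ * sζ := by rw [← hnζ2]; ring
    rw [e]
    have hh : 0 ≤ C * ((ε - nξ) * sζ) :=
      mul_nonneg hC (mul_nonneg (by linarith only [hnξε]) hsζ0)
    nlinarith only [hh]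
  have t3 : 2*(C * (nξ * (nξ * nζ))) ≤ 2 * (C * ε * sξ) := by
    have e : nξ * (nξ * nζ) = nζ * sξ := by rw [← hnξ2]; ring
    rw [e]
    have hh : 0 ≤ C * ((ε - nζ) * sξ) :=
      mul_nonneg hC (mul_nonneg (by linarith only [hnζε]) hsξ0)
    nlinarith only [hh]
  have t4 : C * ((nξ * nζ) * (nξ * nζ)) ≤ C * ε * sζ := by
    have e : (nξ * nζ) * (nξ * nζ) = sξ * sζ := by rw [← hnξ2, ← hnζ2]; ring
    rw [e]
    have hse : sξ ≤ ε := by nlinarith only [hsξε, hεpos, hε1]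
    have h1 : sξ * sζ ≤ ε * sζ := mul_le_mul_of_nonneg_right hse hsζ0
    nlinarith only [mul_le_mul_of_nonneg_left h1 hC]
  have hupfin : H' ≤ 4 * (C * ε) * (sξ + sζ) := by
    have hlast : C * ε * (sξ + sζ) + 2 * (C * ε * sζ) + 2 * (C * ε * sξ) + C * ε * sζ
        ≤ 4 * (C * ε) * (sξ + sζ) := by
      have hh : 0 ≤ C * ε * sξ := mul_nonneg (mul_nonneg hC hεpos.le) hsξ0
      linarith only [hh]
    linarith only [hup, t1, t2, t3, t4, hlast]
  -- lower bound via coercivity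
  have k1 : (1 - ε^2) * sξ ≤ (1 - sξ) * sξ := by
    nlinarith only [mul_nonneg (sub_nonneg.mpr hsξε.le) hsξ0]
  have k2 : (1 - ε^2) * sζ ≤ (1 - sζ) * sζ := by
    nlinarith only [mul_nonneg (sub_nonneg.mpr hsζε.le) hsζ0]
  have hlow : c * ((1 - ε^2) * (sξ + sζ)) ≤ H' := by
    refine le_trans ?_ hcoer'
    apply mul_le_mul_of_nonneg_left _ hc.le
    linarith only [k1, k2]
  -- conclude
  have hcm : c/2 ≤ c - c*ε^2 - 4*C*ε := by
    have he2 : 0 ≤ ε - ε^2 := by nlinarith only [hεpos, hε1]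
    have h1 : 0 ≤ c * (ε - ε^2) := mul_nonneg hc.le he2
    nlinarith only [hεc, hεpos, h1]
  have hsum0 : sξ + sζ ≤ 0 := by
    by_contra hcon
    push_neg at hcon
    have h1 : c * ((1 - ε^2) * (sξ + sζ)) ≤ 4 * (C * ε) * (sξ + sζ) :=
      le_trans hlow hupfin
    have h2 : (c/2) * (sξ + sζ) ≤ (c - c*ε^2 - 4*C*ε) * (sξ + sζ) :=
      mul_le_mul_of_nonneg_right hcm hs20
    have h3 : 0 < (c/2) * (sξ + sζ) := mul_pos (half_pos hc) hcon
    nlinarith only [h1, h2, h3]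
  have hsξz : sξ = 0 := by linarith only [hsum0, hsξ0, hsζ0]
  have hsζz : sζ = 0 := by linarith only [hsum0, hsξ0, hsζ0]
  have hξz : ξ = 0 := en2_eq_zero (by rw [← hsξ]; exact hsξz)
  have hζz : ζ = 0 := en2_eq_zero (by rw [← hsζ]; exact hsζz)
  refine ⟨a, b, ?_, ?_⟩
  · have h : φ - a • φ₀ = 0 := by rw [← hξdef]; exact hξz
    have := sub_eq_zero.mp h
    exact this
  · have h : χ - b • χ₀ = 0 := by rw [← hζdef]; exact hζz
    have := sub_eq_zero.mp h
    exact this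


open EW
theorem quadratic_zero_isolated (Na Nb : ℕ) (Ω : Mat Na Nb) (hΩ : IsWitness Ω)
    (φ₀ : Fin Na → ℂ) (χ₀ : Fin Nb → ℂ) (hz : IsZeroOf Ω φ₀ χ₀)
    (hnφ : EW.enorm φ₀ = 1) (hnχ : EW.enorm χ₀ = 1)
    (hquad : ∀ ξ ζ, ¬ IsHessianZeroAt Ω φ₀ χ₀ ξ ζ) :
    ∃ ε > 0, ∀ (φ : Fin Na → ℂ) (χ : Fin Nb → ℂ), IsZeroOf Ω φ χ →
      EW.enorm φ = 1 → EW.enorm χ = 1 →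
      EW.enorm (φ - φ₀) < ε → EW.enorm (χ - χ₀) < ε →
      ∃ a b : ℂ, φ = a • φ₀ ∧ χ = b • χ₀ := by
  obtain ⟨ε, hε, hmain⟩ := quadratic_zero_isolated' Na Nb Ω hΩ φ₀ χ₀ hz.2.2 hnφ hnχ hquad
  exact ⟨ε, hε, fun φ χ hzc h1 h2 h3 h4 => hmain φ χ hzc.2.2 h1 h2 h3 h4⟩
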